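/- For every integer n ≥ 4 and every integer k ≥ 2, φ_k(P_n) = k·(φ_k(P_{n−2}) + φ_{k−1}(P_{n−2})) + C(k,2)·((k−2)!·S(n−2,k−2) + 2·(k−1)!·S(n−2,k−1) + k!·S(n−2,k)). -/

import Mathlib

open SimpleGraph

def IsDistinguishing {V : Type*} {k : ℕ} (G : SimpleGraph V) (c : V → Fin k) : Prop :=
  ∀ α : G ≃g G, (∀ v, c (α v) = c v) → ∀ v, α v = v

noncomputable def Phi {V : Type*} (G : SimpleGraph V) (k : ℕ) : ℕ :=
  Nat.card (Quot (fun c₁ c₂ : {c : V → Fin k // IsDistinguishing G c} =>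
    ∃ α : G ≃g G, ∀ v, c₁.1 v = c₂.1 (α v)))

noncomputable def phi {V : Type*} (G : SimpleGraph V) (k : ℕ) : ℕ :=
  Nat.card (Quot (fun c₁ c₂ : {c : V → Fin k // IsDistinguishing G c ∧ Function.Surjective c} =>
    ∃ α : G ≃g G, ∀ v, c₁.1 v = c₂.1 (α v)))

noncomputable def theta {V : Type*} (G : SimpleGraph V) : ℕ :=
  sInf {t | ∀ k, t ≤ k → ∀ c : V → Fin k, Function.Surjective c → IsDistinguishing G c}

def stirling2 : ℕ → ℕ → ℕ
  | 0, 0 => 1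
  | 0, _ + 1 => 0
  | _ + 1, 0 => 0
  | n + 1, k + 1 => (k + 1) * stirling2 n (k + 1) + stirling2 n k

def IsDCPartition {V : Type*} [DecidableEq V] [Fintype V] (G : SimpleGraph V)
    (P : Finpartition (Finset.univ : Finset V)) : Prop :=
  ∀ α : G ≃g G, (∀ p ∈ P.parts, p.image ⇑α = p) → ∀ v, α v = v

def IsDPartition {V : Type*} [DecidableEq V] [Fintype V] (G : SimpleGraph V)
    (P : Finpartition (Finset.univ : Finset V)) : Prop :=
  ∀ α : G ≃g G, P.parts.image (fun p => p.image ⇑α) = P.parts → ∀ v, α v = v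

def PartEquiv {V : Type*} [DecidableEq V] [Fintype V] (G : SimpleGraph V)
    (P₁ P₂ : Finpartition (Finset.univ : Finset V)) : Prop :=
  ∃ α : G ≃g G, P₁.parts.image (fun p => p.image ⇑α) = P₂.parts

noncomputable def psi {V : Type*} [DecidableEq V] [Fintype V] (G : SimpleGraph V) (k : ℕ) : ℕ :=
  Nat.card (Quot (fun P₁ P₂ : {P : Finpartition (Finset.univ : Finset V) //
      IsDCPartition G P ∧ P.parts.card = k} => PartEquiv G P₁.1 P₂.1))

noncomputable def PsiAtMost {V : Type*} [DecidableEq V] [Fintype V] (G : SimpleGraph V) (k : ℕ) : ℕ :=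
  Nat.card (Quot (fun P₁ P₂ : {P : Finpartition (Finset.univ : Finset V) //
      IsDCPartition G P ∧ P.parts.card ≤ k} => PartEquiv G P₁.1 P₂.1))

noncomputable def PiAtMost {V : Type*} [DecidableEq V] [Fintype V] (G : SimpleGraph V) (k : ℕ) : ℕ :=
  Nat.card (Quot (fun P₁ P₂ : {P : Finpartition (Finset.univ : Finset V) //
      P.parts.card ≤ k} => PartEquiv G P₁.1 P₂.1))

noncomputable def XiAtMost {V : Type*} [DecidableEq V] [Fintype V] (G : SimpleGraph V) (k : ℕ) : ℕ :=
  Nat.card (Quot (fun P₁ P₂ : {P : Finpartition (Finset.univ : Finset V) //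
      IsDPartition G P ∧ P.parts.card ≤ k} => PartEquiv G P₁.1 P₂.1))

def kneserGraph2 (n : ℕ) : SimpleGraph {s : Finset (Fin n) // s.card = 2} where
  Adj a b := Disjoint a.1 b.1
  symm := ⟨fun a b h => h.symm⟩
  loopless := by
    constructor
    rintro ⟨s, hs⟩ h
    simp only [disjoint_self, Finset.bot_eq_empty] at h
    simp [h] at hs

def lexProd {V W : Type*} (X : SimpleGraph V) (Y : SimpleGraph W) : SimpleGraph (V × W) where
  Adj a b := X.Adj a.1 b.1 ∨ (a.1 = b.1 ∧ Y.Adj a.2 b.2)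
  symm := by
    constructor
    rintro ⟨x, y⟩ ⟨x', y'⟩ (h | ⟨h, h'⟩)
    · exact Or.inl h.symm
    · exact Or.inr ⟨h.symm, h'.symm⟩
  loopless := by
    constructor
    rintro ⟨x, y⟩ (h | ⟨-, h⟩)
    · exact X.irrefl h
    · exact Y.irrefl h

def IsNaturalAut {V W : Type*} (X : SimpleGraph V) (Y : SimpleGraph W)
    (μ : lexProd X Y ≃g lexProd X Y) : Prop :=
  ∀ x : V, ∃ x' : V, (fun p => μ p) '' ({x} ×ˢ (Set.univ : Set W)) = {x'} ×ˢ (Set.univ : Set W)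

noncomputable def distNumber {V : Type*} (G : SimpleGraph V) : ℕ :=
  sInf {k | ∃ c : V → Fin k, IsDistinguishing G c}


/-! ### Auxiliary lemmas -/

section Aux

private lemma card_surj_aux : ∀ (n k : ℕ),
    Nat.card {f : Fin n → Fin k // Function.Surjective f} = k.factorial * stirling2 n k := by
  intro n
  induction n with
  | zero =>
    intro k
    match k with
    | 0 =>
      have : Unique {f : Fin 0 → Fin 0 // Function.Surjective f} :=
        ⟨⟨⟨finZeroElim, fun y => y.elim0⟩⟩, by rintro ⟨a, -⟩; ext x; exact x.elim0⟩
      simp [Nat.card_unique, stirling2]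
    | k + 1 =>
      have : IsEmpty {f : Fin 0 → Fin (k+1) // Function.Surjective f} := by
        constructor; rintro ⟨f, hf⟩
        obtain ⟨x, -⟩ := hf 0
        exact x.elim0
      simp [Nat.card_of_isEmpty, stirling2]
  | succ n IH =>
    intro k
    match k with
    | 0 =>
      have : IsEmpty {f : Fin (n+1) → Fin 0 // Function.Surjective f} := by
        constructor; rintro ⟨f, -⟩; exact (f 0).elim0
      simp [Nat.card_of_isEmpty, stirling2]
    | k + 1 =>
      have key : Nat.card {f : Fin (n+1) → Fin (k+1) // Function.Surjective f} =
          Nat.card ((Fin (k+1) × {g : Fin n → Fin (k+1) // Function.Surjective g}) ⊕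
            (Fin (k+1) × {h : Fin n → Fin k // Function.Surjective h})) := by
        refine (Nat.card_eq_of_bijective (Sum.elim
          (fun p => ⟨Fin.cons p.1 p.2.1, by
            intro y
            obtain ⟨x, hx⟩ := p.2.2 y
            exact ⟨x.succ, by simpa using hx⟩⟩)
          (fun p => ⟨Fin.cons p.1 (p.1.succAbove ∘ p.2.1), by
            intro y
            by_cases hy : y = p.1
            · exact ⟨0, by simp [hy]⟩
            · obtain ⟨z, hz⟩ := Fin.exists_succAbove_eq (show y ≠ p.1 from hy)
              obtain ⟨x, hx⟩ := p.2.2 z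
              exact ⟨x.succ, by simp [hx, hz]⟩⟩)) ⟨?_, ?_⟩).symm
        · rintro (⟨a, g, hg⟩ | ⟨a, h, hh⟩) (⟨a', g', hg'⟩ | ⟨a', h', hh'⟩) heq <;>
            simp only [Sum.elim_inl, Sum.elim_inr, Subtype.mk.injEq] at heq <;>
            replace heq := congrArg Subtype.val heq <;> dsimp only at heq
          · have h0 := congrFun heq 0
            simp only [Fin.cons_zero] at h0
            have ht : g = g' := by
              funext x; have := congrFun heq x.succ; simpa using this
            simp [Prod.ext_iff, Subtype.ext_iff, h0, ht]
          · exfalso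
            have h0 := congrFun heq 0
            simp only [Fin.cons_zero] at h0
            obtain ⟨x, hx⟩ := hg a
            have := congrFun heq x.succ
            simp only [Fin.cons_succ, Function.comp_apply] at this
            rw [hx] at this
            exact Fin.succAbove_ne a' (h' x) (by rw [← this, h0])
          · exfalso
            have h0 := congrFun heq 0
            simp only [Fin.cons_zero] at h0
            obtain ⟨x, hx⟩ := hg' a'
            have := congrFun heq x.succ
            simp only [Fin.cons_succ, Function.comp_apply] at this
            rw [hx] at this
            exact Fin.succAbove_ne a (h x) (by rw [this, ← h0])
          · have h0 := congrFun heq 0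
            simp only [Fin.cons_zero] at h0
            have ht : h = h' := by
              funext x; have := congrFun heq x.succ
              simp only [Fin.cons_succ, Function.comp_apply] at this
              rw [h0] at this
              exact Fin.succAbove_right_injective this
            simp [Prod.ext_iff, Subtype.ext_iff, h0, ht]
        · rintro ⟨f, hf⟩
          by_cases hg : Function.Surjective (Fin.tail f)
          · refine ⟨Sum.inl ⟨f 0, ⟨Fin.tail f, hg⟩⟩, ?_⟩
            simp [Fin.cons_self_tail]
          · have hmiss : ∀ x, Fin.tail f x ≠ f 0 := by
              intro x hx
              apply hg
              intro y
              by_cases hy : y = f 0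
              · exact ⟨x, by rw [hx, hy]⟩
              · obtain ⟨i, hi⟩ := hf y
                induction i using Fin.cases with
                | zero => exact absurd hi (Ne.symm hy)
                | succ j => exact ⟨j, hi⟩
            set h : Fin n → Fin k := fun x => (Fin.exists_succAbove_eq (hmiss x)).choose with hh
            have hspec : ∀ x, (f 0).succAbove (h x) = Fin.tail f x :=
              fun x => (Fin.exists_succAbove_eq (hmiss x)).choose_spec
            have hsurj : Function.Surjective h := by
              intro z
              obtain ⟨i, hi⟩ := hf ((f 0).succAbove z)
              induction i using Fin.cases with
              | zero => exact absurd hi.symm (Fin.succAbove_ne _ _)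
              | succ j =>
                refine ⟨j, Fin.succAbove_right_injective (p := f 0) ?_⟩
                rw [hspec j]; exact hi
            refine ⟨Sum.inr ⟨f 0, ⟨h, hsurj⟩⟩, ?_⟩
            apply Subtype.ext
            show Fin.cons (f 0) ((f 0).succAbove ∘ h) = f
            funext i
            induction i using Fin.cases with
            | zero => simp
            | succ j => simp only [Fin.cons_succ, Function.comp_apply, hspec j]; rfl
      rw [key, Nat.card_sum, Nat.card_prod, Nat.card_prod, Nat.card_eq_fintype_card (α := Fin (k+1)),
        Fintype.card_fin, IH (k+1), IH k]
      show (k+1) * ((k+1).factorial * stirling2 n (k+1)) + (k+1) * (k.factorial * stirling2 n k)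
        = (k+1).factorial * ((k + 1) * stirling2 n (k + 1) + stirling2 n k)
      rw [Nat.factorial_succ]
      ring

private lemma pal_eval_aux {n k : ℕ} (c : Fin n → Fin k) (hcp : ∀ i, c i.rev = c i) (i : Fin n)
    (hi' : min i.val (n - 1 - i.val) < n) :
    c ⟨min i.val (n - 1 - i.val), hi'⟩ = c i := by
  have hlt := i.isLt
  rcases Nat.le_total i.val (n - 1 - i.val) with h | h
  · have : (⟨min i.val (n - 1 - i.val), hi'⟩ : Fin n) = i := Fin.ext (by simp; omega)
    rw [this]
  · have : (⟨min i.val (n - 1 - i.val), hi'⟩ : Fin n) = i.rev :=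
      Fin.ext (by simp [Fin.val_rev]; omega)
    rw [this, hcp i]

private lemma card_pal_aux (n k : ℕ) (hn : 1 ≤ n) :
    Nat.card {c : Fin n → Fin k // Function.Surjective c ∧ ∀ i, c i.rev = c i} =
      Nat.card {d : Fin ((n+1)/2) → Fin k // Function.Surjective d} := by
  set m := (n+1)/2 with hm
  have hmn : m ≤ n := by omega
  have hfold : ∀ i : Fin n, min i.val (n - 1 - i.val) < m := by
    intro i; have := i.isLt; omega
  have hfold' : ∀ i : Fin n, min i.val (n - 1 - i.val) < n := fun i => lt_of_lt_of_le (hfold i) hmn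
  refine Nat.card_eq_of_bijective
    (fun c => ⟨fun j => c.1 ⟨j.val, lt_of_lt_of_le j.isLt hmn⟩, ?_⟩) ⟨?_, ?_⟩
  · intro y
    obtain ⟨i, hi⟩ := c.2.1 y
    refine ⟨⟨min i.val (n - 1 - i.val), hfold i⟩, ?_⟩
    show c.1 ⟨min i.val (n - 1 - i.val), hfold' i⟩ = y
    rw [pal_eval_aux c.1 c.2.2 i (hfold' i)]; exact hi
  · rintro ⟨c, hc⟩ ⟨c', hc'⟩ heq
    simp only [Subtype.mk.injEq] at heq ⊢
    funext i
    rw [← pal_eval_aux c hc.2 i (hfold' i), ← pal_eval_aux c' hc'.2 i (hfold' i)]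
    have := congrFun (congrArg Subtype.val heq) ⟨min i.val (n - 1 - i.val), hfold i⟩
    simpa using this
  · rintro ⟨d, hd⟩
    have hj : ∀ j : Fin m, min j.val (n - 1 - j.val) = j.val := by
      intro j; have := j.isLt; omega
    refine ⟨⟨fun i => d ⟨min i.val (n - 1 - i.val), hfold i⟩, ?_, ?_⟩, ?_⟩
    · intro y
      obtain ⟨j, hjy⟩ := hd y
      refine ⟨⟨j.val, lt_of_lt_of_le j.isLt hmn⟩, ?_⟩
      show d ⟨min j.val (n - 1 - j.val), _⟩ = y
      rw [show (⟨min j.val (n-1-j.val), hfold ⟨j.val, lt_of_lt_of_le j.isLt hmn⟩⟩ : Fin m) = j from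
        Fin.ext (by simp [hj j])]
      exact hjy
    · intro i
      have hlt := i.isLt
      show d ⟨min i.rev.val (n - 1 - i.rev.val), _⟩ = d ⟨min i.val (n - 1 - i.val), _⟩
      congr 1
      exact Fin.ext (by simp [Fin.val_rev]; omega)
    · apply Subtype.ext
      funext j
      show d ⟨min j.val (n - 1 - j.val), _⟩ = d j
      congr 1
      exact Fin.ext (by simp [hj j])

private def pathRevIso (n : ℕ) : pathGraph n ≃g pathGraph n where
  toEquiv := Fin.revPerm
  map_rel_iff' := by
    intro u v
    have hu := u.isLt; have hv := v.isLt
    simp only [Fin.revPerm_apply, pathGraph_adj, Fin.val_rev]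
    omega

private lemma adj_zero_aux {n : ℕ} (u v : Fin n) (hv : v.val = 0) (h : (pathGraph n).Adj u v) :
    u.val = 1 := by
  rw [pathGraph_adj] at h; omega

private lemma path_aut_fix_zero {n : ℕ} (α : pathGraph n ≃g pathGraph n)
    (h0 : ∀ hn : 0 < n, α ⟨0, hn⟩ = ⟨0, hn⟩) : ∀ v, α v = v := by
  have key : ∀ j, (∀ hj : j < n, α ⟨j, hj⟩ = ⟨j, hj⟩) ∧
      (∀ hj : j + 1 < n, α ⟨j+1, hj⟩ = ⟨j+1, hj⟩) := by
    intro j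
    induction j with
    | zero =>
      refine ⟨fun hj => h0 hj, fun hj => ?_⟩
      have hadj : (pathGraph n).Adj (⟨0+1, hj⟩ : Fin n) ⟨0, by omega⟩ :=
        pathGraph_adj.mpr (Or.inr rfl)
      have hadj' : (pathGraph n).Adj (α ⟨0+1, hj⟩) (α ⟨0, by omega⟩) := α.map_rel_iff.mpr hadj
      rw [h0 (by omega)] at hadj'
      have := adj_zero_aux _ _ rfl hadj'
      exact Fin.ext (by simp only [Fin.val_mk]; omega)
    | succ j IH =>
      refine ⟨IH.2, fun hj => ?_⟩
      have hadj : (pathGraph n).Adj (⟨j+1+1, hj⟩ : Fin n) ⟨j+1, by omega⟩ :=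
        pathGraph_adj.mpr (Or.inr rfl)
      have hadj' : (pathGraph n).Adj (α ⟨j+1+1, hj⟩) (α ⟨j+1, by omega⟩) := α.map_rel_iff.mpr hadj
      rw [IH.2 (by omega)] at hadj'
      rw [pathGraph_adj] at hadj'
      simp only [Fin.val_mk] at hadj'
      rcases hadj' with h | h
      · exfalso
        have heq : α ⟨j+1+1, hj⟩ = (⟨j, by omega⟩ : Fin n) := Fin.ext (by
          simp only [Fin.val_mk]; omega)
        rw [← IH.1 (by omega)] at heq
        have := congrArg Fin.val (α.injective heq)
        simp only [Fin.val_mk] at this; omega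
      · exact Fin.ext (by simp only [Fin.val_mk]; omega)
  intro v
  have := (key v.val).1 v.isLt
  simpa using this

private lemma path_aut {n : ℕ} (hn : 2 ≤ n) (α : pathGraph n ≃g pathGraph n) :
    (∀ v, α v = v) ∨ (∀ v, α v = v.rev) := by
  have hn0 : 0 < n := by omega
  have hends : (α ⟨0, hn0⟩).val = 0 ∨ (α ⟨0, hn0⟩).val = n - 1 := by
    by_contra hcon
    push_neg at hcon
    set x : Fin n := α ⟨0, hn0⟩ with hx
    obtain ⟨hc1, hc2⟩ := hcon
    have hxlt := x.isLt
    have h1 : 0 < x.val := by omega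
    have h2 : x.val + 1 < n := by omega
    have ha1 : (pathGraph n).Adj ⟨x.val - 1, by omega⟩ x :=
      pathGraph_adj.mpr (Or.inl (by simp only [Fin.val_mk]; omega))
    have ha2 : (pathGraph n).Adj ⟨x.val + 1, by omega⟩ x :=
      pathGraph_adj.mpr (Or.inr rfl)
    have hb1 : (pathGraph n).Adj (α.symm ⟨x.val - 1, by omega⟩) ⟨0, hn0⟩ := by
      apply α.map_rel_iff.mp
      rw [RelIso.apply_symm_apply]; exact ha1
    have hb2 : (pathGraph n).Adj (α.symm ⟨x.val + 1, by omega⟩) ⟨0, hn0⟩ := by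
      apply α.map_rel_iff.mp
      rw [RelIso.apply_symm_apply]; exact ha2
    have hv1 := adj_zero_aux _ _ rfl hb1
    have hv2 := adj_zero_aux _ _ rfl hb2
    have heq := α.symm.injective (Fin.ext (hv1.trans hv2.symm))
    have := congrArg Fin.val heq
    simp only [Fin.val_mk] at this; omega
  rcases hends with h | h
  · left
    refine path_aut_fix_zero α (fun hn0' => ?_)
    exact Fin.ext (by simpa using h)
  · right
    set β := α.trans (pathRevIso n) with hβ
    have hβ0 : ∀ hn' : 0 < n, β ⟨0, hn'⟩ = ⟨0, hn'⟩ := by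
      intro hn'
      have hb : β ⟨0, hn'⟩ = (α ⟨0, hn0⟩).rev := rfl
      rw [hb]
      exact Fin.ext (by simp [Fin.val_rev]; omega)
    have hfix := path_aut_fix_zero β hβ0
    intro v
    have hv : (α v).rev = v := hfix v
    conv_lhs => rw [← Fin.rev_rev (α v), hv]

private lemma two_mul_card_quot {α : Type*} [Finite α] (f : α → α) (hinv : Function.Involutive f)
    {S : α → Prop} (hS : ∀ a, S a → S (f a)) (hfix : ∀ a, S a → f a ≠ a) :
    2 * Nat.card (Quot (fun a b : Subtype S => a.1 = b.1 ∨ a.1 = f b.1)) =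
      Nat.card (Subtype S) := by
  classical
  set r : Subtype S → Subtype S → Prop := fun a b => a.1 = b.1 ∨ a.1 = f b.1 with hr
  have hequiv : Equivalence r := by
    constructor
    · exact fun a => Or.inl rfl
    · rintro a b (h | h)
      · exact Or.inl h.symm
      · exact Or.inr (by rw [h, hinv])
    · rintro a b c (h | h) (h' | h')
      · exact Or.inl (h.trans h')
      · exact Or.inr (h.trans h')
      · exact Or.inr (by rw [h, h'])
      · exact Or.inl (by rw [h, h', hinv])
  have hq : ∀ a b : Subtype S, Quot.mk r a = Quot.mk r b ↔ r a b := by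
    intro a b
    rw [Quot.eq]
    exact hequiv.eqvGen_iff
  cases nonempty_fintype α
  haveI : Fintype (Subtype S) := Fintype.ofFinite _
  haveI : Fintype (Quot r) := Fintype.ofFinite _
  rw [Nat.card_eq_fintype_card, Nat.card_eq_fintype_card]
  have hsum : (Finset.univ : Finset (Subtype S)).card =
      ∑ q ∈ (Finset.univ : Finset (Quot r)),
        ((Finset.univ : Finset (Subtype S)).filter (fun x => Quot.mk r x = q)).card :=
    Finset.card_eq_sum_card_fiberwise (by simp)
  have hfiber : ∀ q ∈ (Finset.univ : Finset (Quot r)),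
      ((Finset.univ : Finset (Subtype S)).filter (fun x => Quot.mk r x = q)).card = 2 := by
    rintro q -
    obtain ⟨a, rfl⟩ := Quot.exists_rep q
    have hne : a ≠ (⟨f a.1, hS _ a.2⟩ : Subtype S) := by
      intro h
      exact hfix a.1 a.2 (congrArg Subtype.val h).symm
    rw [show ((Finset.univ : Finset (Subtype S)).filter (fun x => Quot.mk r x = Quot.mk r a)) =
        {a, ⟨f a.1, hS _ a.2⟩} from ?_]
    · exact Finset.card_pair hne
    · ext x
      simp only [Finset.mem_filter, Finset.mem_univ, true_and, Finset.mem_insert,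
        Finset.mem_singleton, hq]
      constructor
      · rintro (h | h)
        · exact Or.inl (Subtype.ext h)
        · exact Or.inr (Subtype.ext h)
      · rintro (rfl | rfl)
        · exact Or.inl rfl
        · exact Or.inr rfl
  show 2 * (Finset.univ : Finset (Quot r)).card = (Finset.univ : Finset (Subtype S)).card
  rw [hsum, Finset.sum_congr rfl hfiber, Finset.sum_const, smul_eq_mul, mul_comm]

private lemma card_split {α : Type*} [Finite α] (P Q : α → Prop) :
    Nat.card {x // P x ∧ Q x} + Nat.card {x // P x ∧ ¬Q x} = Nat.card {x // P x} := by
  classical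
  rw [← Nat.card_sum]
  refine Nat.card_eq_of_bijective
    (Sum.elim (fun x => ⟨x.1, x.2.1⟩) (fun x => ⟨x.1, x.2.1⟩)) ⟨?_, ?_⟩
  · rintro (⟨x, hx⟩ | ⟨x, hx⟩) (⟨y, hy⟩ | ⟨y, hy⟩) h <;>
      simp only [Sum.elim_inl, Sum.elim_inr, Subtype.mk.injEq] at h
    · simp [h]
    · exact absurd (h ▸ hx.2) (by simp [hy.2])
    · exact absurd (h ▸ hx.2) (by simp [hy.2])
    · simp [h]
  · rintro ⟨x, hx⟩
    by_cases hq : Q x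
    · exact ⟨Sum.inl ⟨x, hx, hq⟩, rfl⟩
    · exact ⟨Sum.inr ⟨x, hx, hq⟩, rfl⟩

private lemma dist_iff_not_pal {n k : ℕ} (hn : 2 ≤ n) (c : Fin n → Fin k) :
    IsDistinguishing (pathGraph n) c ↔ ¬ ∀ i : Fin n, c i.rev = c i := by
  constructor
  · intro hd hpal
    have := hd (pathRevIso n) (fun v => hpal v) ⟨0, by omega⟩
    rw [show (pathRevIso n) (⟨0, by omega⟩ : Fin n) = (⟨0, by omega⟩ : Fin n).rev from rfl] at this
    have hv := congrArg Fin.val this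
    rw [Fin.val_rev] at hv
    simp only [Fin.val_mk] at hv
    omega
  · intro hnp α hcol v
    rcases path_aut hn α with h | h
    · exact h v
    · exact absurd (fun i => by rw [← h i]; exact hcol i) hnp

private lemma two_phi_aux (n k : ℕ) (hn : 2 ≤ n) :
    2 * phi (pathGraph n) k + k.factorial * stirling2 ((n+1)/2) k =
      k.factorial * stirling2 n k := by
  classical
  set pal : (Fin n → Fin k) → Prop := fun c => ∀ i : Fin n, c i.rev = c i with hpal
  set f : (Fin n → Fin k) → (Fin n → Fin k) := fun c => fun v => c v.rev with hf
  have hinv : Function.Involutive f := by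
    intro c; funext v; simp [hf, Fin.rev_rev]
  have hS : ∀ c, (Function.Surjective c ∧ ¬ pal c) → (Function.Surjective (f c) ∧ ¬ pal (f c)) := by
    rintro c ⟨hs, hp⟩
    constructor
    · intro y
      obtain ⟨x, hx⟩ := hs y
      exact ⟨x.rev, by simp [hf, Fin.rev_rev, hx]⟩
    · intro hp'
      exact hp (fun i => by
        have := hp' i.rev
        simp only [hf, Fin.rev_rev] at this
        exact this)
  have hfix : ∀ c, (Function.Surjective c ∧ ¬ pal c) → f c ≠ c := by
    rintro c ⟨-, hp⟩ h
    exact hp (fun i => congrFun h i)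
  -- transport the quotient
  have hcard : phi (pathGraph n) k =
      Nat.card (Quot (fun a b : {c : Fin n → Fin k // Function.Surjective c ∧ ¬ pal c} =>
        a.1 = b.1 ∨ a.1 = f b.1)) := by
    apply Nat.card_congr
    refine Quot.congr (Equiv.subtypeEquivRight (fun c => ?_)) ?_
    · rw [dist_iff_not_pal hn c]; tauto
    · rintro ⟨c₁, h₁⟩ ⟨c₂, h₂⟩
      simp only [Equiv.subtypeEquivRight_apply]
      constructor
      · rintro ⟨α, hα⟩
        rcases path_aut hn α with h | h
        · exact Or.inl (funext fun v => by rw [hα v, h v])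
        · exact Or.inr (funext fun v => by rw [hα v, h v])
      · rintro (h | h)
        · exact ⟨RelIso.refl _, fun v => congrFun h v⟩
        · exact ⟨pathRevIso n, fun v => congrFun h v⟩
  have h2q := two_mul_card_quot f hinv hS hfix
  rw [hcard, h2q]
  have hsplit := card_split (fun c : Fin n → Fin k => Function.Surjective c) pal
  have hpalcard : Nat.card {c : Fin n → Fin k // Function.Surjective c ∧ pal c} =
      Nat.card {d : Fin ((n+1)/2) → Fin k // Function.Surjective d} := by
    simpa [hpal] using card_pal_aux n k (by omega)
  rw [← card_surj_aux n k, ← card_surj_aux ((n+1)/2) k, ← hpalcard]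
  omega

end Aux

private lemma two_choose_aux : ∀ m : ℕ, 2 * Nat.choose m 2 = m * (m - 1) := by
  intro m
  induction m with
  | zero => rfl
  | succ m ih =>
    rw [Nat.choose_succ_succ, Nat.mul_add, ih, Nat.choose_one_right]
    cases m with
    | zero => rfl
    | succ c =>
      show 2 * (c+1) + (c+1) * c = (c+2) * (c+1)
      ring

theorem phi_pathGraph_rec (n k : ℕ) (hn : 4 ≤ n) (hk : 2 ≤ k) :
    phi (pathGraph n) k =
      k * (phi (pathGraph (n - 2)) k + phi (pathGraph (n - 2)) (k - 1)) +
        k.choose 2 * ((k - 2).factorial * stirling2 (n - 2) (k - 2) +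
          2 * (k - 1).factorial * stirling2 (n - 2) (k - 1) +
          k.factorial * stirling2 (n - 2) k) := by
  obtain ⟨a, rfl⟩ : ∃ a, n = a + 4 := ⟨n - 4, by omega⟩
  obtain ⟨b, rfl⟩ : ∃ b, k = b + 2 := ⟨k - 2, by omega⟩
  obtain ⟨t, ht⟩ : ∃ t, (a + 2 + 1) / 2 = t + 1 := ⟨(a+3)/2 - 1, by omega⟩
  have E1 := two_phi_aux (a+4) (b+2) (by omega)
  have E2 := two_phi_aux (a+2) (b+2) (by omega)
  have E3 := two_phi_aux (a+2) (b+1) (by omega)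
  rw [show (a+4+1)/2 = t+2 by omega] at E1
  rw [ht] at E2 E3
  show phi (pathGraph (a+4)) (b+2) =
      (b+2) * (phi (pathGraph (a+2)) (b+2) + phi (pathGraph (a+2)) (b+1)) +
        (b+2).choose 2 * (b.factorial * stirling2 (a+2) b +
          2 * (b+1).factorial * stirling2 (a+2) (b+1) +
          (b+2).factorial * stirling2 (a+2) (b+2))
  have r1 : stirling2 (a+4) (b+2) = (b+2) * stirling2 (a+3) (b+2) + stirling2 (a+3) (b+1) := rfl
  have r2 : stirling2 (a+3) (b+2) = (b+2) * stirling2 (a+2) (b+2) + stirling2 (a+2) (b+1) := rfl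
  have r3 : stirling2 (a+3) (b+1) = (b+1) * stirling2 (a+2) (b+1) + stirling2 (a+2) b := rfl
  have r4 : stirling2 (t+2) (b+2) = (b+2) * stirling2 (t+1) (b+2) + stirling2 (t+1) (b+1) := rfl
  have hf2 : (b+2).factorial = (b+2) * ((b+1) * b.factorial) := by
    rw [Nat.factorial_succ, Nat.factorial_succ]
  have hf1 : (b+1).factorial = (b+1) * b.factorial := Nat.factorial_succ b
  have hch := two_choose_aux (b+2)
  simp only [show b+2-1 = b+1 from by omega] at hch
  zify at E1 E2 E3 r1 r2 r3 r4 hf2 hf1 hch ⊢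
  set P : ℤ := (phi (pathGraph (a+4)) (b+2) : ℤ)
  set P1 : ℤ := (phi (pathGraph (a+2)) (b+2) : ℤ)
  set P2 : ℤ := (phi (pathGraph (a+2)) (b+1) : ℤ)
  have G2 : 2 * P = 2 * ((↑b+2) * (P1 + P2) + ((b+2).choose 2 : ℤ) *
      ((b.factorial : ℤ) * (stirling2 (a+2) b : ℤ) +
        2 * ((b+1).factorial : ℤ) * (stirling2 (a+2) (b+1) : ℤ) +
        ((b+2).factorial : ℤ) * (stirling2 (a+2) (b+2) : ℤ))) := by
    linear_combination E1 + ((b+2).factorial : ℤ) * r1 +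
      ((b+2).factorial : ℤ) * ((b:ℤ)+2) * r2 + ((b+2).factorial : ℤ) * r3 -
      ((b+2).factorial : ℤ) * r4 - ((b:ℤ)+2) * E2 - ((b:ℤ)+2) * E3 -
      ((b.factorial : ℤ) * (stirling2 (a+2) b : ℤ) +
        2 * ((b+1).factorial : ℤ) * (stirling2 (a+2) (b+1) : ℤ) +
        ((b+2).factorial : ℤ) * (stirling2 (a+2) (b+2) : ℤ)) * hch +
      ((2*(b:ℤ)+3) * (stirling2 (a+2) (b+1) : ℤ) + (stirling2 (a+2) b : ℤ) -
        (stirling2 (t+1) (b+1) : ℤ)) * hf2 +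
      (-(((b:ℤ)+2)*(2*(b:ℤ)+3) * (stirling2 (a+2) (b+1) : ℤ)) +
        ((b:ℤ)+2) * (stirling2 (t+1) (b+1) : ℤ)) * hf1
  linarith [G2]
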